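/- Let H be a real Hilbert space and T > 0. Let g : [0, T] → H be Bochner integrable with ∫₀^T ‖g(t)‖² dt < ∞, let f : [0, T] → H satisfy f(t) = f(0) + ∫₀^t g(s) ds for all t ∈ [0, T], and let M = sup_{t ∈ [0, T]} ‖f(t)‖. Then for every τ ≥ 0 and h ≥ 0 with τ + h ≤ T, one has |∫_τ^{τ+h} ‖f(t)‖² dt − h·‖f(τ)‖²| ≤ 2·h^{3/2}·M·(∫₀^T ‖g(t)‖² dt)^{1/2}. -/

import Mathlib

open MeasureTheory

/-- Quantitative estimate showing that `τ ↦ ∫₀^τ ‖f(t)‖² dt` is differentiable with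
derivative `‖f(τ)‖²` when `f` is the indefinite Bochner integral of a square integrable
function `g`. -/
theorem sq_norm_integral_increment_estimate
    {H : Type*} [NormedAddCommGroup H] [InnerProductSpace ℝ H] [CompleteSpace H]
    (T : ℝ) (hT : 0 < T) (g f : ℝ → H) (M : ℝ)
    (hg : IntegrableOn g (Set.Icc 0 T))
    (hg2 : IntegrableOn (fun t => ‖g t‖ ^ 2) (Set.Icc 0 T))
    (hf : ∀ t ∈ Set.Icc (0 : ℝ) T, f t = f 0 + ∫ s in (0 : ℝ)..t, g s)
    (hM : M = ⨆ t : Set.Icc (0 : ℝ) T, ‖f (t : ℝ)‖) :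
    ∀ τ h : ℝ, 0 ≤ τ → 0 ≤ h → τ + h ≤ T →
      |(∫ t in τ..(τ + h), ‖f t‖ ^ 2) - h * ‖f τ‖ ^ 2|
        ≤ 2 * h ^ ((3 : ℝ) / 2) * M * (∫ t in (0 : ℝ)..T, ‖g t‖ ^ 2) ^ ((1 : ℝ) / 2) := by
  intro τ h hτ hh hτh
  have hτT : τ ≤ T := by linarith
  have hτmem : τ ∈ Set.Icc (0:ℝ) T := ⟨hτ, hτT⟩
  have hτhmem : τ + h ∈ Set.Icc (0:ℝ) T := ⟨by linarith, hτh⟩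
  set B : ℝ := ∫ t in Set.Icc (0:ℝ) T, ‖g t‖ ^ 2 with hBdef
  have hB0 : 0 ≤ B := setIntegral_nonneg measurableSet_Icc (fun t _ => by positivity)
  have hIocB : (∫ t in (0:ℝ)..T, ‖g t‖ ^ 2) = B := by
    rw [intervalIntegral.integral_of_le hT.le, ← integral_Icc_eq_integral_Ioc]
  set G : ℝ := B ^ ((1:ℝ)/2) with hGdef
  have hG0 : 0 ≤ G := Real.rpow_nonneg hB0 _
  -- interval integrability of g on subintervals of [0,T]
  have hgInt : ∀ a b : ℝ, a ∈ Set.Icc (0:ℝ) T → b ∈ Set.Icc (0:ℝ) T →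
      IntervalIntegrable g volume a b := fun a b ha hb =>
    (hg.mono_set (Set.uIcc_subset_Icc ha hb)).intervalIntegrable
  -- continuity of f on [0,T]
  have hfcont : ContinuousOn f (Set.Icc 0 T) := by
    have hcont : ContinuousOn (fun t => f 0 + ∫ s in (0:ℝ)..t, g s) (Set.Icc 0 T) := by
      have := intervalIntegral.continuousOn_primitive_interval
        (f := g) (a := (0:ℝ)) (b := T) (μ := volume) (by rwa [Set.uIcc_of_le hT.le])
      rw [Set.uIcc_of_le hT.le] at this
      exact continuousOn_const.add this
    exact hcont.congr hf
  -- the sup bound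
  have hbdd : BddAbove (Set.range fun t : Set.Icc (0:ℝ) T => ‖f (t : ℝ)‖) := by
    have := (isCompact_Icc (a := (0:ℝ)) (b := T)).bddAbove_image hfcont.norm
    rwa [Set.image_eq_range] at this
  have hle_M : ∀ t ∈ Set.Icc (0:ℝ) T, ‖f t‖ ≤ M := by
    intro t ht
    rw [hM]
    exact le_ciSup hbdd ⟨t, ht⟩
  have hM0 : 0 ≤ M := le_trans (norm_nonneg _) (hle_M τ hτmem)
  -- key pointwise bound on ‖f t - f τ‖
  have key : ∀ t ∈ Set.Icc τ (τ + h), ‖f t - f τ‖ ≤ h ^ ((1:ℝ)/2) * G := by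
    intro t ht
    have htmem : t ∈ Set.Icc (0:ℝ) T := ⟨le_trans hτ ht.1, le_trans ht.2 hτh⟩
    have hdiff : f t - f τ = ∫ s in τ..t, g s := by
      rw [hf t htmem, hf τ hτmem]
      simp only [add_sub_add_left_eq_sub]
      exact intervalIntegral.integral_interval_sub_left
        (hgInt 0 t ⟨le_refl 0, hT.le⟩ htmem) (hgInt 0 τ ⟨le_refl 0, hT.le⟩ hτmem)
    rw [hdiff]
    calc ‖∫ s in τ..t, g s‖ ≤ ∫ s in τ..t, ‖g s‖ :=
          intervalIntegral.norm_integral_le_integral_norm ht.1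
      _ = ∫ s in Set.Ioc τ t, 1 * ‖g s‖ := by
          rw [intervalIntegral.integral_of_le ht.1]; simp
      _ ≤ (∫ s in Set.Ioc τ t, (1:ℝ) ^ (2:ℝ)) ^ ((1:ℝ)/2) *
            (∫ s in Set.Ioc τ t, ‖g s‖ ^ (2:ℝ)) ^ ((1:ℝ)/2) := by
          have hIoc_sub : Set.Ioc τ t ⊆ Set.Icc (0:ℝ) T :=
            fun x hx => ⟨le_trans hτ hx.1.le, le_trans hx.2 htmem.2⟩
          have hgn : Integrable (fun s => ‖g s‖ ^ 2) (volume.restrict (Set.Ioc τ t)) :=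
            hg2.mono_set hIoc_sub
          have hmeas : AEStronglyMeasurable g (volume.restrict (Set.Ioc τ t)) :=
            (hg.mono_set hIoc_sub).1
          have hmem2 : MemLp (fun s => ‖g s‖) 2 (volume.restrict (Set.Ioc τ t)) := by
            rw [memLp_two_iff_integrable_sq (hmeas.norm)]
            simpa using hgn
          have hone : MemLp (fun _ : ℝ => (1:ℝ)) 2 (volume.restrict (Set.Ioc τ t)) :=
            memLp_const 1
          have hconj : Real.HolderConjugate 2 2 := ⟨by norm_num, by norm_num, by norm_num⟩
          have := integral_mul_le_Lp_mul_Lq_of_nonneg (μ := volume.restrict (Set.Ioc τ t))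
            hconj (Filter.Eventually.of_forall fun _ => zero_le_one)
            (Filter.Eventually.of_forall fun s => norm_nonneg (g s))
            (by simpa using hone) (by simpa using hmem2)
          simpa using this
      _ ≤ h ^ ((1:ℝ)/2) * G := by
          have hIoc_sub : Set.Ioc τ t ⊆ Set.Icc (0:ℝ) T :=
            fun x hx => ⟨le_trans hτ hx.1.le, le_trans hx.2 htmem.2⟩
          have h1 : (∫ s in Set.Ioc τ t, (1:ℝ) ^ (2:ℝ)) = t - τ := by
            simp [Real.volume_Ioc, ENNReal.toReal_ofReal (sub_nonneg.mpr ht.1), ht.1]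
          have h2 : (∫ s in Set.Ioc τ t, ‖g s‖ ^ (2:ℝ)) ≤ B := by
            have heq : (∫ s in Set.Ioc τ t, ‖g s‖ ^ (2:ℝ))
                = ∫ s in Set.Ioc τ t, ‖g s‖ ^ 2 := by
              refine integral_congr_ae (Filter.Eventually.of_forall fun s => ?_)
              show ‖g s‖ ^ (2:ℝ) = ‖g s‖ ^ 2
              rw [show (2:ℝ) = ((2:ℕ):ℝ) by norm_num, Real.rpow_natCast]
            rw [heq, hBdef]
            exact setIntegral_mono_set hg2 (Filter.Eventually.of_forall fun s => by positivity)
              (HasSubset.Subset.eventuallyLE hIoc_sub)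
          have hfirst : (∫ s in Set.Ioc τ t, (1:ℝ) ^ (2:ℝ)) ^ ((1:ℝ)/2) ≤ h ^ ((1:ℝ)/2) := by
            rw [h1]
            exact Real.rpow_le_rpow (by linarith [ht.1]) (by linarith [ht.2]) (by norm_num)
          have hsecond : (∫ s in Set.Ioc τ t, ‖g s‖ ^ (2:ℝ)) ^ ((1:ℝ)/2) ≤ G :=
            Real.rpow_le_rpow (setIntegral_nonneg measurableSet_Ioc fun s _ => by positivity)
              h2 (by norm_num)
          exact mul_le_mul hfirst hsecond (Real.rpow_nonneg
            (setIntegral_nonneg measurableSet_Ioc fun s _ => by positivity) _) (by positivity)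
  -- integrability of ‖f‖² on [τ, τ+h]
  have hfint : IntervalIntegrable (fun t => ‖f t‖ ^ 2) volume τ (τ + h) := by
    apply ContinuousOn.intervalIntegrable
    apply ((hfcont.norm.pow 2).mono (Set.uIcc_subset_Icc hτmem hτhmem))
  -- rewrite h * ‖f τ‖² as an interval integral
  have hconst : h * ‖f τ‖ ^ 2 = ∫ t in τ..(τ + h), ‖f τ‖ ^ 2 := by
    rw [intervalIntegral.integral_const, smul_eq_mul, add_sub_cancel_left]
  rw [hconst, ← intervalIntegral.integral_sub hfint (intervalIntegrable_const)]
  have hbound : ∀ t ∈ Set.uIoc τ (τ + h),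
      ‖‖f t‖ ^ 2 - ‖f τ‖ ^ 2‖ ≤ 2 * M * (h ^ ((1:ℝ)/2) * G) := by
    intro t ht
    rw [Set.uIoc_of_le (by linarith)] at ht
    have htI : t ∈ Set.Icc τ (τ + h) := ⟨ht.1.le, ht.2⟩
    have htmem : t ∈ Set.Icc (0:ℝ) T := ⟨le_trans hτ ht.1.le, le_trans ht.2 hτh⟩
    have hsq : ‖f t‖ ^ 2 - ‖f τ‖ ^ 2 = (‖f t‖ + ‖f τ‖) * (‖f t‖ - ‖f τ‖) := by ring
    rw [Real.norm_eq_abs, hsq, abs_mul]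
    have h1 : |‖f t‖ + ‖f τ‖| ≤ 2 * M := by
      rw [abs_of_nonneg (by positivity)]
      have := hle_M t htmem
      have := hle_M τ hτmem
      linarith
    have h2 : |‖f t‖ - ‖f τ‖| ≤ h ^ ((1:ℝ)/2) * G :=
      le_trans (abs_norm_sub_norm_le _ _) (key t htI)
    exact mul_le_mul h1 h2 (abs_nonneg _) (by positivity)
  have := intervalIntegral.norm_integral_le_of_norm_le_const hbound
  rw [Real.norm_eq_abs] at this
  calc |∫ t in τ..(τ+h), (‖f t‖ ^ 2 - ‖f τ‖ ^ 2)|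
      ≤ 2 * M * (h ^ ((1:ℝ)/2) * G) * |τ + h - τ| := this
    _ = 2 * h ^ ((3:ℝ)/2) * M * G := by
        rw [add_sub_cancel_left, abs_of_nonneg hh]
        rw [show (3:ℝ)/2 = 1/2 + 1 by norm_num, Real.rpow_add' hh (by norm_num),
          Real.rpow_one]
        ring
    _ = 2 * h ^ ((3:ℝ)/2) * M * (∫ t in (0:ℝ)..T, ‖g t‖ ^ 2) ^ ((1:ℝ)/2) := by
        rw [hIocB]
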